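/- Let ℓ ⊂ ℝ² be the line through a point p with unit direction vector d = (cos β, sin β), let n = (−sin β, cos β) be a unit normal to ℓ, let ξ ∈ ℝ² with ξ ∉ ℓ, let z* be the orthogonal projection of ξ onto ℓ, and let ξ' := 2z* − ξ be the mirror image of ξ across ℓ. Let ψ : ℝ → ℝ be differentiable. Then for every y ∈ ℓ with y ≠ ξ, the function s ↦ ψ(‖y + s·n − ξ‖) + ψ(‖y + s·n − ξ'‖) is differentiable at s = 0 with derivative equal to 0. -/

import Mathlib

open Real

/-- Neumann method of images: let `ℓ` be the line through `p` with unit direction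
`d = (cos β, sin β)` and unit normal `n = (−sin β, cos β)`, let `ξ ∉ ℓ`, let `z*` be the
orthogonal projection of `ξ` onto `ℓ`, and let `ξ' = 2z* − ξ` be the mirror image of `ξ`.
For any differentiable radial profile `ψ : ℝ → ℝ` and any `y ∈ ℓ` with `y ≠ ξ`, the
normal derivative of `x ↦ ψ(‖x − ξ‖) + ψ(‖x − ξ'‖)` vanishes at `y`: the map
`s ↦ ψ(‖y + s·n − ξ‖) + ψ(‖y + s·n − ξ'‖)` has derivative `0` at `s = 0`. -/
theorem images_neumann_boundary_condition (β : ℝ) (p d n : EuclideanSpace ℝ (Fin 2))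
    (hd0 : d 0 = Real.cos β) (hd1 : d 1 = Real.sin β)
    (hn0 : n 0 = -Real.sin β) (hn1 : n 1 = Real.cos β)
    (ℓ : Set (EuclideanSpace ℝ (Fin 2)))
    (hℓ : ℓ = {z : EuclideanSpace ℝ (Fin 2) | ∃ t : ℝ, z = p + t • d})
    (ξ : EuclideanSpace ℝ (Fin 2)) (hξ : ξ ∉ ℓ)
    (zs : EuclideanSpace ℝ (Fin 2)) (hzs : zs ∈ ℓ) (hproj : (inner ℝ (ξ - zs) d : ℝ) = 0)
    (ξ' : EuclideanSpace ℝ (Fin 2)) (hξ' : ξ' = (2 : ℝ) • zs - ξ)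
    (ψ : ℝ → ℝ) (hψ : Differentiable ℝ ψ) :
    ∀ y ∈ ℓ, y ≠ ξ →
      HasDerivAt (fun s : ℝ => ψ ‖y + s • n - ξ‖ + ψ ‖y + s • n - ξ'‖) 0 0 := by
  intro y hy hyξ
  -- norm of n is 1
  have hn_norm : ‖n‖ = 1 := by
    rw [EuclideanSpace.norm_eq]
    simp only [Fin.sum_univ_two, hn0, hn1, Real.norm_eq_abs, sq_abs]
    rw [neg_sq, Real.sin_sq_add_cos_sq, Real.sqrt_one]
  -- d ⟂ n
  have hdn : (inner ℝ d n : ℝ) = 0 := by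
    simp only [PiLp.inner_apply, Fin.sum_univ_two, RCLike.inner_apply, conj_trivial,
      hd0, hd1, hn0, hn1]
    ring
  rw [hℓ] at hy hzs
  obtain ⟨t, rfl⟩ := hy
  obtain ⟨t0, rfl⟩ := hzs
  set y := p + t • d with hy'
  set zs := p + t0 • d with hzs'
  have hyz : y - zs = (t - t0) • d := by rw [hy', hzs']; module
  have hyzn : (inner ℝ (y - zs) n : ℝ) = 0 := by
    rw [hyz, real_inner_smul_left, hdn, mul_zero]
  have hyzξ : (inner ℝ (y - zs) (ξ - zs) : ℝ) = 0 := by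
    rw [hyz, real_inner_smul_left, real_inner_comm, hproj, mul_zero]
  set a : ℝ := inner ℝ (y - ξ) n with ha
  set r : ℝ := ‖y - ξ‖ with hr
  have hsplit : y - ξ = (y - zs) - (ξ - zs) := by abel
  have hsplit' : y - ξ' = (y - zs) + (ξ - zs) := by rw [hξ']; module
  have ha' : (inner ℝ (y - ξ') n : ℝ) = -a := by
    have h1 : (inner ℝ (y - ξ') n : ℝ) = inner ℝ (y - zs) n + inner ℝ (ξ - zs) n := by
      rw [hsplit', inner_add_left]
    have h2 : a = (inner ℝ (y - zs) n : ℝ) - inner ℝ (ξ - zs) n := by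
      rw [ha, hsplit, inner_sub_left]
    rw [h1, h2, hyzn]; ring
  have hr' : ‖y - ξ'‖ = r := by
    have h2 : ‖y - ξ'‖ ^ 2 = r ^ 2 := by
      rw [hr, hsplit', hsplit, norm_add_sq_real (y - zs) (ξ - zs),
        norm_sub_sq_real (y - zs) (ξ - zs), hyzξ]
      ring
    have := congrArg Real.sqrt h2
    rwa [Real.sqrt_sq (norm_nonneg _), Real.sqrt_sq (norm_nonneg _)] at this
  have hr0 : r ≠ 0 := by
    rw [hr]
    exact norm_ne_zero_iff.mpr (sub_ne_zero.mpr hyξ)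
  -- express the two norms as square roots
  have key1 : ∀ s : ℝ, ‖y + s • n - ξ‖ = Real.sqrt (r ^ 2 + 2 * a * s + s ^ 2) := by
    intro s
    have h : y + s • n - ξ = (y - ξ) + s • n := by abel
    rw [h, ← Real.sqrt_sq (norm_nonneg ((y - ξ) + s • n))]
    congr 1
    rw [norm_add_sq_real, real_inner_smul_right, norm_smul, ha, hr]
    simp [hn_norm, mul_pow]
    ring
  have key2 : ∀ s : ℝ, ‖y + s • n - ξ'‖ = Real.sqrt (r ^ 2 - 2 * a * s + s ^ 2) := by
    intro s
    have h : y + s • n - ξ' = (y - ξ') + s • n := by abel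
    rw [h, ← Real.sqrt_sq (norm_nonneg ((y - ξ') + s • n))]
    congr 1
    rw [norm_add_sq_real, real_inner_smul_right, norm_smul, ha', hr']
    simp [hn_norm, mul_pow]
    ring
  have hfun : (fun s : ℝ => ψ ‖y + s • n - ξ‖ + ψ ‖y + s • n - ξ'‖)
      = (fun s : ℝ => ψ (Real.sqrt (r ^ 2 + 2 * a * s + s ^ 2))
        + ψ (Real.sqrt (r ^ 2 - 2 * a * s + s ^ 2))) := by
    funext s; rw [key1, key2]
  rw [hfun]
  have hr2 : r ^ 2 ≠ 0 := pow_ne_zero _ hr0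
  have hsr : Real.sqrt (r ^ 2) = r := Real.sqrt_sq (norm_nonneg _)
  -- derivatives of the inner polynomials
  have hg1 : HasDerivAt (fun s : ℝ => r ^ 2 + 2 * a * s + s ^ 2) (2 * a) 0 := by
    have := (((hasDerivAt_id (0 : ℝ)).const_mul (2 * a)).const_add (r ^ 2)).add
      (hasDerivAt_pow 2 (0 : ℝ))
    simp at this; exact this
  have hg2 : HasDerivAt (fun s : ℝ => r ^ 2 - 2 * a * s + s ^ 2) (-(2 * a)) 0 := by
    have := (((hasDerivAt_id (0 : ℝ)).const_mul (2 * a)).const_sub (r ^ 2)).add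
      (hasDerivAt_pow 2 (0 : ℝ))
    simp at this; exact this
  have hne1 : (fun s : ℝ => r ^ 2 + 2 * a * s + s ^ 2) 0 ≠ 0 := by simpa using hr2
  have hne2 : (fun s : ℝ => r ^ 2 - 2 * a * s + s ^ 2) 0 ≠ 0 := by simpa using hr2
  have hs1 := hg1.sqrt hne1
  have hs2 := hg2.sqrt hne2
  have ht1 := (hψ _).hasDerivAt.comp 0 hs1
  have ht2 := (hψ _).hasDerivAt.comp 0 hs2
  have htot := ht1.add ht2
  have heq0 : Real.sqrt ((fun s : ℝ => r ^ 2 + 2 * a * s + s ^ 2) 0) = r := by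
    simp [hsr]
  have heq0' : Real.sqrt ((fun s : ℝ => r ^ 2 - 2 * a * s + s ^ 2) 0) = r := by
    simp [hsr]
  refine htot.congr_deriv ?_
  have e1 : r ^ 2 + 2 * a * 0 + 0 ^ 2 = r ^ 2 := by ring
  have e2 : r ^ 2 - 2 * a * 0 + 0 ^ 2 = r ^ 2 := by ring
  rw [e1, e2, hsr]
  ring
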